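/- Let n′ ≥ 1 be odd and N = n′ + 2. Let λ = (λ_1, λ_2) be a regular highest weight for GL_2 and λ′ = (λ′_1, …, λ′_{n′}) a regular essentially self-dual highest weight for GL_{n′}; set μ = (λ_1, λ_2, λ′_1, …, λ′_{n′}) ∈ ℤ^N, w = w(λ) = λ_1 − λ_2 + 1, w′ = w(λ′), and let T = { S + S′ : S ∈ {0, w}, S′ ∈ {S_0(λ′), …, S_{n′−1}(λ′)} }. Assume 2t ≠ w + w′ for all t ∈ T, and set p(μ) = (w + w′) − max{ t ∈ T : 2t < w + w′ }. Then there exist a dominant weight μ̃ ∈ ℤ^N and a permutation σ ∈ S_N with ℓ(σ) = n′ such that σ·μ̃ = μ, if and only if (w + w′) − 2p(μ) + 2 − N ≤ (λ_1 + λ_2) − (λ′_1 + λ′_{n′}) ≤ 2p(μ) − (w + w′) − 2 − N. -/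

import Mathlib

/-- The length (number of inversions) of a permutation of `Fin N`:
`ℓ(σ) = #{ (i,j) : i < j and σ(i) > σ(j) }`. -/
def permLength {N : ℕ} (σ : Equiv.Perm (Fin N)) : ℕ :=
  (Finset.univ.filter (fun q : Fin N × Fin N => q.1 < q.2 ∧ σ q.2 < σ q.1)).card

/-- The half-sum of positive roots of `GL_N`, `ρ̃_i = (N + 1 − 2i)/2` in 1-based
indexing, i.e. `ρ̃_i = (N − 1)/2 − i` in 0-based indexing (`N` odd). -/
def rhoGL (N : ℕ) : Fin N → ℤ := fun i => ((N : ℤ) - 1) / 2 - (i : ℤ)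

section helpers


lemma permLength_inv {N : ℕ} (σ : Equiv.Perm (Fin N)) : permLength σ⁻¹ = permLength σ := by
  unfold permLength
  apply Finset.card_bij (fun q _ => (σ⁻¹ q.2, σ⁻¹ q.1))
  · intro q hq
    simp only [Finset.mem_filter, Finset.mem_univ, true_and] at hq ⊢
    exact ⟨hq.2, by simpa using hq.1⟩
  · intro a ha b hb h
    simp only [Prod.mk.injEq, EmbeddingLike.apply_eq_iff_eq] at h
    exact Prod.ext h.2 h.1
  · intro b hb
    simp only [Finset.mem_filter, Finset.mem_univ, true_and] at hb ⊢
    refine ⟨(σ b.2, σ b.1), ⟨hb.2, by simpa using hb.1⟩, by simp⟩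

lemma permLength_eq_card {N : ℕ} (σ : Equiv.Perm (Fin N)) (v u : Fin N → ℤ)
    (hv : ∀ i j : Fin N, i < j → v j < v i)
    (huv : ∀ i, u i = v (σ⁻¹ i)) :
    permLength σ = (Finset.univ.filter
      (fun q : Fin N × Fin N => q.1 < q.2 ∧ u q.1 < u q.2)).card := by
  have key : ∀ a b : Fin N, a < b ↔ v b < v a := by
    intro a b
    constructor
    · exact hv a b
    · intro h
      rcases lt_trichotomy a b with h' | h' | h'
      · exact h'
      · subst h'; exact absurd h (lt_irrefl _)
      · exact absurd (hv b a h') (by omega)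
  rw [← permLength_inv]
  unfold permLength
  congr 1
  apply Finset.filter_congr
  intro q _
  simp only [huv, (fun x => Equiv.symm_apply_apply σ x : ∀ x, σ⁻¹ (σ x) = x)]
  rw [key (σ⁻¹ q.2) (σ⁻¹ q.1)]

lemma strictAnti_gap {N : ℕ} (v : Fin N → ℤ)
    (hv : ∀ i j : Fin N, i < j → v j < v i) :
    ∀ d : ℕ, ∀ i j : Fin N, (j : ℕ) = (i : ℕ) + d → v j + (j : ℤ) ≤ v i + (i : ℤ) := by
  intro d
  induction d with
  | zero =>
    intro i j h
    have : i = j := Fin.ext (by omega)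
    subst this; exact le_refl _
  | succ d ih =>
    intro i j h
    have hj0 : 0 < (j : ℕ) := by omega
    have hjN : (j : ℕ) - 1 < N := by omega
    set k : Fin N := ⟨(j : ℕ) - 1, hjN⟩ with hk
    have hk1 : (k : ℕ) = (i : ℕ) + d := by simp [hk]; omega
    have h1 := ih i k hk1
    have h2 : v j < v k := hv k j (by simp [Fin.lt_def, hk]; omega)
    have h3 : ((j : ℕ) : ℤ) = ((k : ℕ) : ℤ) + 1 := by simp [hk]; omega
    omega

lemma card_shift {n' : ℕ} (C : ℕ → Prop) [DecidablePred C] :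
    (Finset.univ.filter (fun j : Fin (n'+2) => 2 ≤ (j:ℕ) ∧ C ((j:ℕ) - 2))).card
      = ((Finset.range n').filter C).card := by
  refine Finset.card_bij (fun j _ => (j : ℕ) - 2) ?_ ?_ ?_
  · intro j hj
    simp only [Finset.mem_filter, Finset.mem_univ, true_and, Finset.mem_range] at hj ⊢
    exact ⟨by have := j.isLt; omega, hj.2⟩
  · intro a ha b hb h
    simp only [Finset.mem_filter, Finset.mem_univ, true_and] at ha hb
    have h' : (a : ℕ) - 2 = (b : ℕ) - 2 := h
    exact Fin.ext (by omega)
  · intro s hs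
    simp only [Finset.mem_filter, Finset.mem_range] at hs
    refine ⟨⟨s + 2, by omega⟩, ?_, by simp⟩
    simp only [Finset.mem_filter, Finset.mem_univ, true_and]
    exact ⟨by simp, by simpa using hs.2⟩

lemma card_pairs {n' : ℕ} (u : Fin (n'+2) → ℤ)
    (h01 : u 1 < u 0)
    (htail : ∀ i j : Fin (n'+2), 2 ≤ (i:ℕ) → i < j → u j < u i) :
    (Finset.univ.filter (fun q : Fin (n'+2) × Fin (n'+2) => q.1 < q.2 ∧ u q.1 < u q.2)).card
      = (Finset.univ.filter (fun j : Fin (n'+2) => 2 ≤ (j:ℕ) ∧ u 0 < u j)).card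
        + (Finset.univ.filter (fun j : Fin (n'+2) => 2 ≤ (j:ℕ) ∧ u 1 < u j)).card := by
  have h01' : ((1 : Fin (n'+2)) : ℕ) = 1 := rfl
  have hset : Finset.univ.filter (fun q : Fin (n'+2) × Fin (n'+2) => q.1 < q.2 ∧ u q.1 < u q.2)
      = ((Finset.univ.filter (fun j : Fin (n'+2) => 2 ≤ (j:ℕ) ∧ u 0 < u j)).image
          (fun j => ((0 : Fin (n'+2)), j)))
        ∪ ((Finset.univ.filter (fun j : Fin (n'+2) => 2 ≤ (j:ℕ) ∧ u 1 < u j)).image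
          (fun j => ((1 : Fin (n'+2)), j))) := by
    ext ⟨i, j⟩
    simp only [Finset.mem_filter, Finset.mem_univ, true_and, Finset.mem_union,
      Finset.mem_image, Prod.mk.injEq]
    constructor
    · rintro ⟨hij, huij⟩
      have hij' : (i : ℕ) < (j : ℕ) := hij
      rcases Nat.lt_or_ge (i : ℕ) 2 with hi2 | hi2
      · interval_cases h : (i : ℕ)
        · have hi : i = 0 := Fin.ext (by simpa using h)
          subst hi
          have hj2 : 2 ≤ (j : ℕ) := by
            rcases Nat.lt_or_ge (j : ℕ) 2 with hj | hj
            · exfalso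
              have : (j : ℕ) = 1 := by omega
              have hj1 : j = 1 := Fin.ext (by simpa using this)
              subst hj1
              omega
            · exact hj
          exact Or.inl ⟨j, ⟨hj2, huij⟩, rfl, rfl⟩
        · have hi : i = 1 := Fin.ext (by rw [h01']; simpa using h)
          subst hi
          exact Or.inr ⟨j, ⟨by omega, huij⟩, rfl, rfl⟩
      · exact absurd (htail i j hi2 hij) (by omega)
    · rintro (⟨k, ⟨hk2, hk⟩, hik, hjk⟩ | ⟨k, ⟨hk2, hk⟩, hik, hjk⟩) <;> subst hik <;> subst hjk
      · exact ⟨by rw [Fin.lt_def]; have : ((0 : Fin (n'+2)) : ℕ) = 0 := (by simp); omega, hk⟩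
      · exact ⟨by rw [Fin.lt_def, h01']; omega, hk⟩
  rw [hset, Finset.card_union_of_disjoint, Finset.card_image_of_injective,
    Finset.card_image_of_injective]
  · intro a b h; simpa using h
  · intro a b h; simpa using h
  · rw [Finset.disjoint_left]
    rintro ⟨a1, a2⟩ ha hb
    simp only [Finset.mem_image, Prod.mk.injEq] at ha hb
    obtain ⟨k, _, hk1, _⟩ := ha
    obtain ⟨m, _, hm1, _⟩ := hb
    rw [← hk1] at hm1
    exact absurd (congrArg Fin.val hm1) (by simp)

lemma core_count (n' : ℕ) (S : ℕ → ℤ)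
    (w w' X q : ℤ)
    (hdual : ∀ s, s < n' → S s + S (n' - 1 - s) = w')
    (T : Finset ℤ)
    (hT : T = Finset.image₂ (· + ·) ({0, w} : Finset ℤ) ((Finset.range n').image S))
    (hmid : ∀ t ∈ T, 2 * t ≠ w + w')
    (hq : IsGreatest {t : ℤ | t ∈ T ∧ 2 * t < w + w'} q) :
    ((∀ s, s < n' → S s ≠ X) ∧ (∀ s, s < n' → S s ≠ X - w) ∧
      ((Finset.range n').filter (fun s => S s < X)).card
        + ((Finset.range n').filter (fun s => S s < X - w)).card = n')
    ↔ (q + 1 ≤ X ∧ q + 1 ≤ w + w' - X) := by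
  have memT : ∀ t : ℤ, t ∈ T ↔ ∃ s, s < n' ∧ (t = S s ∨ t = w + S s) := by
    intro t
    simp only [hT, Finset.mem_image₂, Finset.mem_image, Finset.mem_insert,
      Finset.mem_singleton, Finset.mem_range]
    constructor
    · rintro ⟨a, (rfl | rfl), b, ⟨s, hs, rfl⟩, rfl⟩
      · exact ⟨s, hs, Or.inl (by ring)⟩
      · exact ⟨s, hs, Or.inr rfl⟩
    · rintro ⟨s, hs, (rfl | rfl)⟩
      · exact ⟨0, Or.inl rfl, S s, ⟨s, hs, rfl⟩, by ring⟩
      · exact ⟨w, Or.inr rfl, S s, ⟨s, hs, rfl⟩, rfl⟩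
  have hSinT : ∀ s, s < n' → S s ∈ T := fun s hs => (memT _).mpr ⟨s, hs, Or.inl rfl⟩
  have hwSinT : ∀ s, s < n' → w + S s ∈ T := fun s hs => (memT _).mpr ⟨s, hs, Or.inr rfl⟩
  have h2q : 2 * q < w + w' := hq.1.2
  have hqub : ∀ t ∈ T, 2 * t < w + w' → t ≤ q := fun t ht h2t => hq.2 ⟨ht, h2t⟩
  have main : ((∀ s, s < n' → S s ≠ X) ∧ (∀ s, s < n' → S s ≠ X - w) ∧
      ((Finset.range n').filter (fun s => S s < X)).card
        + ((Finset.range n').filter (fun s => S s < X - w)).card = n')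
      ↔ (∀ s, s < n' → (S s < X ∧ S s < w + w' - X) ∨ (X < S s ∧ w + w' - X < S s)) := by
    have hrefl : ((Finset.range n').filter (fun s => ¬ S s < X - w)).card
        = ((Finset.range n').filter (fun s => S s ≤ w + w' - X)).card := by
      refine Finset.card_bij (fun s _ => n' - 1 - s) ?_ ?_ ?_
      · intro s hs
        simp only [Finset.mem_filter, Finset.mem_range, not_lt] at hs ⊢
        have hd := hdual s hs.1
        exact ⟨by omega, by omega⟩
      · intro a ha b hb h
        simp only [Finset.mem_filter, Finset.mem_range] at ha hb
        have h' : n' - 1 - a = n' - 1 - b := h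
        omega
      · intro s hs
        simp only [Finset.mem_filter, Finset.mem_range, not_lt] at hs ⊢
        refine ⟨n' - 1 - s, ⟨by omega, ?_⟩, by omega⟩
        have hd := hdual (n' - 1 - s) (by omega)
        have he : n' - 1 - (n' - 1 - s) = s := by omega
        rw [he] at hd
        omega
    have htot := Finset.card_filter_add_card_filter_not
      (s := Finset.range n') (fun s => S s < X - w)
    rw [Finset.card_range] at htot
    constructor
    · rintro ⟨hX, hXw, hcount⟩
      have hZ : ∀ s, s < n' → S s ≠ w + w' - X := by
        intro s hs h
        have hd := hdual s hs
        exact hXw (n' - 1 - s) (by omega) (by omega)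
      have hcards : ((Finset.range n').filter (fun s => S s < X)).card
          = ((Finset.range n').filter (fun s => S s ≤ w + w' - X)).card := by omega
      intro s hs
      have hXs := hX s hs
      have hZs := hZ s hs
      rcases le_total X (w + w' - X) with hle | hle
      · have hsub : (Finset.range n').filter (fun s => S s < X)
            ⊆ (Finset.range n').filter (fun s => S s ≤ w + w' - X) := by
          intro a ha
          simp only [Finset.mem_filter] at ha ⊢
          exact ⟨ha.1, by omega⟩
        have heq := Finset.eq_of_subset_of_card_le hsub (le_of_eq hcards.symm)
        rcases lt_trichotomy (S s) (w + w' - X) with h | h | h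
        · have hmem : s ∈ (Finset.range n').filter (fun s => S s ≤ w + w' - X) := by
            simp only [Finset.mem_filter, Finset.mem_range]; exact ⟨hs, le_of_lt h⟩
          rw [← heq] at hmem
          simp only [Finset.mem_filter] at hmem
          left; exact ⟨hmem.2, h⟩
        · exact absurd h hZs
        · right; omega
      · have hsub : (Finset.range n').filter (fun s => S s ≤ w + w' - X)
            ⊆ (Finset.range n').filter (fun s => S s < X) := by
          intro a ha
          simp only [Finset.mem_filter, Finset.mem_range] at ha ⊢
          have := hX a ha.1
          exact ⟨ha.1, by omega⟩
        have heq := Finset.eq_of_subset_of_card_le hsub (le_of_eq hcards)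
        rcases lt_trichotomy (S s) X with h | h | h
        · have hmem : s ∈ (Finset.range n').filter (fun s => S s < X) := by
            simp only [Finset.mem_filter, Finset.mem_range]; exact ⟨hs, h⟩
          rw [← heq] at hmem
          simp only [Finset.mem_filter] at hmem
          left; exact ⟨h, by omega⟩
        · exact absurd h hXs
        · right; omega
    · intro h
      have hX : ∀ s, s < n' → S s ≠ X := by
        intro s hs; rcases h s hs with ⟨h1, _⟩ | ⟨h1, _⟩ <;> omega
      have hZ : ∀ s, s < n' → S s ≠ w + w' - X := by
        intro s hs; rcases h s hs with ⟨_, h1⟩ | ⟨_, h1⟩ <;> omega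
      have hXw : ∀ s, s < n' → S s ≠ X - w := by
        intro s hs heq
        have hd := hdual s hs
        exact hZ (n' - 1 - s) (by omega) (by omega)
      refine ⟨hX, hXw, ?_⟩
      have hseteq : (Finset.range n').filter (fun s => S s < X)
          = (Finset.range n').filter (fun s => S s ≤ w + w' - X) := by
        ext a
        simp only [Finset.mem_filter, Finset.mem_range]
        constructor
        · rintro ⟨ha, h1⟩
          rcases h a ha with ⟨_, h2⟩ | ⟨h2, _⟩ <;> [exact ⟨ha, le_of_lt h2⟩; omega]
        · rintro ⟨ha, h1⟩
          rcases h a ha with ⟨h2, _⟩ | ⟨_, h2⟩ <;> [exact ⟨ha, h2⟩; omega]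
      rw [hseteq]
      omega
  rw [main]
  constructor
  · intro h
    by_contra hc
    push_neg at hc
    obtain ⟨s, hs, hcase⟩ := (memT q).mp hq.1.1
    rcases hcase with hqs | hqs
    · rcases h s hs with ⟨h1, h2⟩ | ⟨h1, h2⟩ <;> omega
    · have hs' : n' - 1 - s < n' := by omega
      have hd := hdual s hs
      rcases h _ hs' with ⟨h1, h2⟩ | ⟨h1, h2⟩ <;> omega
  · rintro ⟨hqX, hqZ⟩ s hs
    have hne := hmid _ (hSinT s hs)
    rcases lt_trichotomy (2 * S s) (w + w') with hlt | heq | hgt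
    · have := hqub _ (hSinT s hs) hlt
      left; omega
    · exact absurd heq hne
    · have hs' : n' - 1 - s < n' := by omega
      have hd := hdual s hs
      have h2 : 2 * (w + S (n' - 1 - s)) < w + w' := by omega
      have := hqub _ (hwSinT _ hs') h2
      right; omega

end helpers

/-- Combinatorial Lemma for `n = 2`: Let `n′ ≥ 1` be odd, `N = n′ + 2`,
let `λ = (λ_1, λ_2)` be a regular highest weight for `GL_2` and `λ′` a regular
essentially self-dual highest weight for `GL_{n′}`; set
`μ = (λ_1, λ_2, λ′_1, …, λ′_{n′}) ∈ ℤ^N`, `w = λ_1 − λ_2 + 1`, `w′ = w(λ′)`, and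
`T = { S + S′ : S ∈ {0, w}, S′ ∈ {S_0(λ′), …, S_{n′−1}(λ′)} }`. Assume `2t ≠ w + w′`
for all `t ∈ T`, and set `p(μ) = (w + w′) − max{ t ∈ T : 2t < w + w′ }`. Then there
exist a dominant (nonincreasing) weight `μ̃ ∈ ℤ^N` and a permutation `σ ∈ S_N` with
`ℓ(σ) = n′` such that the Kostant dot action gives `σ·μ̃ = σ(μ̃ + ρ̃) − ρ̃ = μ`, if
and only if
`(w + w′) − 2p(μ) + 2 − N ≤ (λ_1 + λ_2) − (λ′_1 + λ′_{n′}) ≤ 2p(μ) − (w + w′) − 2 − N`. -/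
theorem stmt_11 (n' : ℕ) (hn' : 1 ≤ n') (hodd : Odd n') (N : ℕ) (hN : N = n' + 2)
    (l1 l2 : ℤ) (hl : l2 ≤ l1) (hlreg : 2 ≤ l1 - l2 + 1)
    (lam' : ℕ → ℤ)
    (hmono' : ∀ i, 1 ≤ i → i < n' → lam' (i + 1) ≤ lam' i)
    (hreg' : ∀ i, 1 ≤ i → i ≤ n' - 1 → 2 ≤ lam' i - lam' (i + 1) + 1)
    (hsd' : ∀ i, 1 ≤ i → i ≤ n' - 1 →
      lam' i - lam' (i + 1) + 1 = lam' (n' - i) - lam' (n' - i + 1) + 1)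
    (mu : Fin N → ℤ)
    (hmu : ∀ i : Fin N, mu i =
      if (i : ℕ) = 0 then l1 else if (i : ℕ) = 1 then l2 else lam' ((i : ℕ) - 1))
    (w w' : ℤ) (hw : w = l1 - l2 + 1)
    (hw' : w' = ∑ i ∈ Finset.Icc 1 (n' - 1), (lam' i - lam' (i + 1) + 1))
    (T : Finset ℤ)
    (hT : T = Finset.image₂ (· + ·) ({0, w} : Finset ℤ)
      ((Finset.range n').image
        (fun s => ∑ i ∈ Finset.Icc 1 s, (lam' i - lam' (i + 1) + 1))))
    (hmid : ∀ t ∈ T, 2 * t ≠ w + w')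
    (q : ℤ) (hq : IsGreatest {t : ℤ | t ∈ T ∧ 2 * t < w + w'} q)
    (p : ℤ) (hp : p = w + w' - q) :
    (∃ (muTilde : Fin N → ℤ) (σ : Equiv.Perm (Fin N)),
      (∀ i j : Fin N, i ≤ j → muTilde j ≤ muTilde i)
      ∧ permLength σ = n'
      ∧ (∀ i : Fin N, (muTilde (σ⁻¹ i) + rhoGL N (σ⁻¹ i)) - rhoGL N i = mu i))
    ↔ ((w + w') - 2 * p + 2 - (N : ℤ) ≤ (l1 + l2) - (lam' 1 + lam' n')
        ∧ (l1 + l2) - (lam' 1 + lam' n') ≤ 2 * p - (w + w') - 2 - (N : ℤ)) := by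
  subst hN hw hp
  set Sf : ℕ → ℤ := fun s => ∑ i ∈ Finset.Icc 1 s, (lam' i - lam' (i + 1) + 1) with hSf
  set X : ℤ := lam' 1 - l2 - 1 with hX
  set K : ℤ := (((n' + 2 : ℕ) : ℤ) - 1) / 2 with hK
  have hrho : ∀ i : Fin (n' + 2), rhoGL (n' + 2) i = K - ((i : ℕ) : ℤ) := fun i => rfl
  set u : Fin (n' + 2) → ℤ := fun i => mu i + rhoGL (n' + 2) i with hu
  -- telescoping
  have htel : ∀ s : ℕ, Sf s = lam' 1 - lam' (s + 1) + (s : ℤ) := by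
    intro s
    induction s with
    | zero => simp [hSf]
    | succ s ih =>
      have hstep : Sf (s + 1) = Sf s + (lam' (s + 1) - lam' (s + 1 + 1) + 1) := by
        rw [hSf]
        exact Finset.sum_Icc_succ_top (by omega) _
      rw [hstep, ih]
      push_cast
      ring
  have hw'' : w' = Sf (n' - 1) := hw'
  have hG3 : w' = lam' 1 - lam' n' + ((n' : ℤ) - 1) := by
    rw [hw'', htel (n' - 1)]
    have e : n' - 1 + 1 = n' := by omega
    rw [e]
    have : ((n' - 1 : ℕ) : ℤ) = (n' : ℤ) - 1 := by omega
    omega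
  -- monotonicity of lam'
  have hmono : ∀ a b, 1 ≤ a → a ≤ b → b ≤ n' → lam' b ≤ lam' a := by
    intro a b ha hab hb
    induction b with
    | zero => omega
    | succ b ih =>
      rcases Nat.eq_or_lt_of_le hab with h | h
      · rw [← h]
      · have h1 := hmono' b (by omega) (by omega)
        have h2 := ih (by omega) (by omega)
        omega
  have hSmono : ∀ s t, s < t → t ≤ n' - 1 → Sf s < Sf t := by
    intro s t hst ht
    rw [htel s, htel t]
    have := hmono (s + 1) (t + 1) (by omega) (by omega) (by omega)
    omega
  -- self-duality
  have hpair : ∀ s, s ≤ n' - 1 → lam' (s + 1) + lam' (n' - s) = lam' 1 + lam' n' := by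
    intro s hs
    induction s with
    | zero => simp
    | succ s ih =>
      have ih' := ih (by omega)
      have hsd := hsd' (s + 1) (by omega) (by omega)
      have e1 : n' - (s + 1) = n' - s - 1 := by omega
      rw [e1] at hsd
      have e2 : n' - s - 1 + 1 = n' - s := by omega
      rw [e2] at hsd
      rw [e1]
      omega
  have hdual : ∀ s, s < n' → Sf s + Sf (n' - 1 - s) = w' := by
    intro s hs
    rw [htel s, htel (n' - 1 - s), hG3]
    have e1 : n' - 1 - s + 1 = n' - s := by omega
    rw [e1]
    have hp := hpair s (by omega)
    have c1 : ((n' - 1 - s : ℕ) : ℤ) = (n' : ℤ) - 1 - (s : ℤ) := by omega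
    omega
  -- values of u
  have hu0 : u 0 = l1 + K := by
    rw [hu]
    simp only [hrho]
    rw [hmu 0]
    norm_num
  have hu1 : u 1 = l2 + K - 1 := by
    rw [hu]
    simp only [hrho]
    rw [hmu 1]
    have hv1 : ((1 : Fin (n' + 2)) : ℕ) = 1 := rfl
    rw [hv1]
    norm_num
    ring
  have huj : ∀ j : Fin (n' + 2), 2 ≤ (j : ℕ) →
      u j = lam' 1 - Sf ((j : ℕ) - 2) + K - 2 := by
    intro j hj
    have hmuj : mu j = lam' ((j : ℕ) - 1) := by
      rw [hmu j, if_neg (by omega), if_neg (by omega)]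
    have e : (j : ℕ) - 1 = ((j : ℕ) - 2) + 1 := by omega
    rw [e] at hmuj
    have h1 := htel ((j : ℕ) - 2)
    have c1 : (((j : ℕ) - 2 : ℕ) : ℤ) = ((j : ℕ) : ℤ) - 2 := by omega
    rw [hu]
    simp only [hrho]
    rw [hmuj]
    omega
  have h01 : u 1 < u 0 := by rw [hu0, hu1]; omega
  have htail : ∀ i j : Fin (n' + 2), 2 ≤ (i : ℕ) → i < j → u j < u i := by
    intro i j hi hij
    have hij' : (i : ℕ) < (j : ℕ) := hij
    have hjn : (j : ℕ) < n' + 2 := j.isLt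
    rw [huj i hi, huj j (by omega)]
    have := hSmono ((i : ℕ) - 2) ((j : ℕ) - 2) (by omega) (by omega)
    omega
  -- counting
  have hcomp0 : ∀ j : Fin (n' + 2), 2 ≤ (j : ℕ) →
      (u 0 < u j ↔ Sf ((j : ℕ) - 2) < X - (l1 - l2 + 1)) := by
    intro j hj
    rw [hu0, huj j hj, hX]
    omega
  have hcomp1 : ∀ j : Fin (n' + 2), 2 ≤ (j : ℕ) →
      (u 1 < u j ↔ Sf ((j : ℕ) - 2) < X) := by
    intro j hj
    rw [hu1, huj j hj, hX]
    omega
  have hP : (Finset.univ.filter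
        (fun q : Fin (n' + 2) × Fin (n' + 2) => q.1 < q.2 ∧ u q.1 < u q.2)).card
      = ((Finset.range n').filter (fun s => Sf s < X - (l1 - l2 + 1))).card
        + ((Finset.range n').filter (fun s => Sf s < X)).card := by
    rw [card_pairs u h01 htail]
    congr 1
    · rw [← card_shift (fun s => Sf s < X - (l1 - l2 + 1))]
      congr 1
      apply Finset.filter_congr
      intro j _
      exact and_congr_right (fun hj => hcomp0 j hj)
    · rw [← card_shift (fun s => Sf s < X)]
      congr 1
      apply Finset.filter_congr
      intro j _
      exact and_congr_right (fun hj => hcomp1 j hj)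
  have hcore := core_count n' Sf (l1 - l2 + 1) w' X q hdual T hT hmid hq
  -- final arithmetic equivalence between core RHS and the stated inequalities
  have hfin : (q + 1 ≤ X ∧ q + 1 ≤ (l1 - l2 + 1) + w' - X) ↔
      (((l1 - l2 + 1) + w') - 2 * ((l1 - l2 + 1) + w' - q) + 2 - ((n' + 2 : ℕ) : ℤ)
          ≤ (l1 + l2) - (lam' 1 + lam' n')
        ∧ (l1 + l2) - (lam' 1 + lam' n')
          ≤ 2 * ((l1 - l2 + 1) + w' - q) - ((l1 - l2 + 1) + w') - 2 - ((n' + 2 : ℕ) : ℤ)) := by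
    rw [hX]
    have c1 : ((n' + 2 : ℕ) : ℤ) = (n' : ℤ) + 2 := by omega
    omega
  rw [← hfin, ← hcore]
  constructor
  · rintro ⟨mt, σ, hdom, hlen, hact⟩
    set v : Fin (n' + 2) → ℤ := fun k => mt k + rhoGL (n' + 2) k with hv
    have hvanti : ∀ i j : Fin (n' + 2), i < j → v j < v i := by
      intro i j hij
      have h1 := hdom i j (le_of_lt hij)
      have h2 : (i : ℕ) < (j : ℕ) := hij
      simp only [hv, hrho]
      omega
    have huv : ∀ i, u i = v (σ⁻¹ i) := by
      intro i
      have := hact i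
      simp only [hu, hv] at *
      omega
    have hinj : Function.Injective u := by
      intro a b hab
      have hvinj : v (σ⁻¹ a) = v (σ⁻¹ b) := by rw [← huv a, ← huv b]; exact hab
      have h2 : σ⁻¹ a = σ⁻¹ b := by
        by_contra hne
        rcases lt_or_gt_of_ne hne with h | h
        · have := hvanti _ _ h; omega
        · have := hvanti _ _ h; omega
      simpa using congrArg σ h2
    have hlenP : ((Finset.range n').filter (fun s => Sf s < X)).card
        + ((Finset.range n').filter (fun s => Sf s < X - (l1 - l2 + 1))).card = n' := by
      have := permLength_eq_card σ v u hvanti huv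
      rw [this] at hlen
      omega
    have hne1 : ∀ s, s < n' → Sf s ≠ X := by
      intro s hs heq
      have hj : s + 2 < n' + 2 := by omega
      set j : Fin (n' + 2) := ⟨s + 2, hj⟩ with hjdef
      have hj2 : 2 ≤ (j : ℕ) := by simp [hjdef]
      have hv2 : (j : ℕ) - 2 = s := by simp [hjdef]
      have hne : (1 : Fin (n' + 2)) ≠ j := by
        intro h
        have := congrArg Fin.val h
        simp [hjdef] at this
      have : u 1 ≠ u j := fun h => hne (hinj h)
      rw [hu1, huj j hj2, hv2] at this
      rw [hX] at heq
      omega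
    have hne0 : ∀ s, s < n' → Sf s ≠ X - (l1 - l2 + 1) := by
      intro s hs heq
      have hj : s + 2 < n' + 2 := by omega
      set j : Fin (n' + 2) := ⟨s + 2, hj⟩ with hjdef
      have hj2 : 2 ≤ (j : ℕ) := by simp [hjdef]
      have hv2 : (j : ℕ) - 2 = s := by simp [hjdef]
      have hne : (0 : Fin (n' + 2)) ≠ j := by
        intro h
        have := congrArg Fin.val h
        simp [hjdef] at this
      have : u 0 ≠ u j := fun h => hne (hinj h)
      rw [hu0, huj j hj2, hv2] at this
      rw [hX] at heq
      omega
    exact ⟨hne1, hne0, hlenP⟩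
  · rintro ⟨hne1, hne0, hcount⟩
    -- build injectivity of u
    have hkey : ∀ a b : Fin (n' + 2), a < b → u a ≠ u b := by
      intro a b hab
      have hab' : (a : ℕ) < (b : ℕ) := hab
      rcases Nat.lt_or_ge (a : ℕ) 2 with ha2 | ha2
      · rcases Nat.lt_or_ge (b : ℕ) 2 with hb2 | hb2
        · -- a = 0, b = 1
          have ha : a = 0 := Fin.ext (by have : ((0 : Fin (n' + 2)) : ℕ) = 0 := (by simp); omega)
          have hb : b = 1 := Fin.ext (by have : ((1 : Fin (n' + 2)) : ℕ) = 1 := rfl; omega)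
          subst ha; subst hb
          omega
        · have hs : (b : ℕ) - 2 < n' := by have := b.isLt; omega
          interval_cases h : (a : ℕ)
          · have ha : a = 0 := Fin.ext (by simpa using h)
            subst ha
            rw [hu0, huj b hb2]
            have := hne0 _ hs
            rw [hX] at this
            omega
          · have ha : a = 1 := Fin.ext (by have : ((1 : Fin (n' + 2)) : ℕ) = 1 := rfl; omega)
            subst ha
            rw [hu1, huj b hb2]
            have := hne1 _ hs
            rw [hX] at this
            omega
      · exact ne_of_gt (htail a b ha2 hab)
    have hinj : Function.Injective u := by
      intro a b h
      rcases lt_trichotomy a b with h' | h' | h'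
      · exact absurd h (hkey a b h')
      · exact h'
      · exact absurd h.symm (hkey b a h')
    -- sorting permutation
    set g : Fin (n' + 2) → ℤ := fun i => -u i with hg
    set τ : Equiv.Perm (Fin (n' + 2)) := Tuple.sort g with hτ
    have hginj : Function.Injective (g ∘ τ) := by
      intro a b h
      simp only [hg, Function.comp_apply, neg_inj] at h
      exact (Equiv.injective τ) (hinj h)
    have hsm : StrictMono (g ∘ τ) := (Tuple.monotone_sort g).strictMono_of_injective hginj
    set v : Fin (n' + 2) → ℤ := fun k => u (τ k) with hv
    have hvanti : ∀ i j : Fin (n' + 2), i < j → v j < v i := by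
      intro i j hij
      have := hsm hij
      simp only [hg, Function.comp_apply] at this
      simp only [hv]
      omega
    have huv : ∀ i, u i = v (τ⁻¹ i) := by
      intro i
      simp only [hv]
      rw [show τ (τ⁻¹ i) = i from Equiv.apply_symm_apply τ i]
    refine ⟨fun k => v k - rhoGL (n' + 2) k, τ, ?_, ?_, ?_⟩
    · intro i j hij
      have hij' : (i : ℕ) ≤ (j : ℕ) := hij
      have := strictAnti_gap v hvanti ((j : ℕ) - (i : ℕ)) i j (by omega)
      simp only [hrho]
      omega
    · rw [permLength_eq_card τ v u hvanti huv]
      omega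
    · intro i
      show v (τ⁻¹ i) - rhoGL (n' + 2) (τ⁻¹ i) + rhoGL (n' + 2) (τ⁻¹ i)
        - rhoGL (n' + 2) i = mu i
      have h1 : v (τ⁻¹ i) = u i := (huv i).symm
      have h2 : u i = mu i + rhoGL (n' + 2) i := rfl
      omega
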